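/- For a ∈ ℂ define γ_a: (0,∞) → ℂ by γ_a(ρ) = e^{a√(2ρ)} / √(2ρ). Then for every j ∈ ℕ₀ and every ρ > 0, |γ_a^{(j)}(ρ)| ≤ 2^j (j+1)! (e^{j+1} + (1/j!)(ρ/2)^{j/2} |a|^j) |γ_a(ρ)| / ρ^j. -/

import Mathlib

open Finset Complex

/-- Coefficients in the formula for iterated derivatives of `exp (a√(2r))/√(2r)`. -/
def gcoef : ℕ → ℕ → ℤ
  | 0, 0 => 1
  | 0, _+1 => 0
  | j+1, 0 => -(2*(j:ℤ)+1) * gcoef j 0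
  | j+1, k+1 => gcoef j k + ((k:ℤ) - 2*j) * gcoef j (k+1)

lemma gcoef_eq_zero : ∀ j k : ℕ, j < k → gcoef j k = 0
  | 0, 0, h => absurd h (by omega)
  | 0, k+1, _ => rfl
  | j+1, 0, h => absurd h (by omega)
  | j+1, k+1, h => by
      rw [gcoef, gcoef_eq_zero j k (by omega), gcoef_eq_zero j (k+1) (by omega)]
      ring

lemma gcoef_natAbs_le : ∀ j k : ℕ, (gcoef j k).natAbs ≤ (2*j)^(j-k) * j.choose k
  | 0, 0 => le_refl 1
  | 0, k+1 => by simp [gcoef]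
  | j+1, 0 => by
      rw [gcoef]
      have h1 := gcoef_natAbs_le j 0
      have : ((-(2*(j:ℤ)+1)) * gcoef j 0).natAbs = (2*j+1) * (gcoef j 0).natAbs := by
        rw [Int.natAbs_mul]; norm_num; omega
      rw [this]
      simp only [Nat.choose_zero_right, mul_one, Nat.sub_zero] at *
      calc (2*j+1) * (gcoef j 0).natAbs ≤ (2*j+1) * (2*j)^j := by
            exact Nat.mul_le_mul_left _ h1
        _ ≤ (2*(j+1)) * (2*(j+1))^j := by
            exact Nat.mul_le_mul (by omega) (Nat.pow_le_pow_left (by omega) j)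
        _ = (2*(j+1))^(j+1) := by ring
  | j+1, k+1 => by
      rcases le_or_gt (j+1) k with hk | hk
      · rw [gcoef_eq_zero _ _ (by omega)]; simp
      · rw [gcoef]
        have h1 := gcoef_natAbs_le j k
        have h2 := gcoef_natAbs_le j (k+1)
        calc (gcoef j k + ((k:ℤ) - 2*j) * gcoef j (k+1)).natAbs
            ≤ (gcoef j k).natAbs + (((k:ℤ) - 2*j) * gcoef j (k+1)).natAbs :=
              Int.natAbs_add_le _ _
          _ ≤ (2*j)^(j-k) * j.choose k + (2*j) * ((2*j)^(j-(k+1)) * j.choose (k+1)) := by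
              gcongr
              · rw [Int.natAbs_mul]
                exact Nat.mul_le_mul (by omega) h2
          _ ≤ (2*(j+1))^(j+1-(k+1)) * (j+1).choose (k+1) := by
              rcases le_or_gt (k+1) j with hkj | hkj
              · have e2 : j + 1 - (k+1) = (j - (k+1)) + 1 := by omega
                have e1 : j - k = (j - (k+1)) + 1 := by omega
                rw [Nat.choose_succ_succ j k, e2, e1, pow_succ, pow_succ]
                calc (2*j)^(j-(k+1)) * (2*j) * j.choose k + 2*j * ((2*j)^(j-(k+1)) * j.choose (k+1))
                    = (2*j)^(j-(k+1)) * (2*j) * (j.choose k + j.choose (k+1)) := by ring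
                  _ ≤ (2*(j+1))^(j-(k+1)) * (2*(j+1)) * (j.choose k + j.choose (k+1)) := by
                      gcongr <;> omega
                  _ = (2*(j+1))^(j-(k+1)) * (2*(j+1)) * (j.choose k + j.choose k.succ) := rfl
              · have hkj' : k = j := by omega
                subst hkj'
                simp [Nat.choose_succ_self, Nat.choose_self]

noncomputable def Gsum (a : ℂ) (j : ℕ) (r : ℝ) : ℂ :=
  ∑ k ∈ Finset.range (j+1), (gcoef j k : ℂ) * a^k * Complex.exp (a * Real.sqrt (2*r)) *
    (Real.sqrt (2*r) : ℂ) ^ ((k:ℤ) - (2*(j:ℤ)+1))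

lemma gsum_hasDerivAt (a : ℂ) (j : ℕ) (r : ℝ) (hr : 0 < r) :
    HasDerivAt (Gsum a j) (Gsum a (j+1) r) r := by
  have h2r : (0:ℝ) < 2*r := by linarith
  set s := Real.sqrt (2*r) with hsdef
  have hs : 0 < s := Real.sqrt_pos.mpr h2r
  have hne : ((s:ℝ):ℂ) ≠ 0 := by exact_mod_cast ne_of_gt hs
  have hS : HasDerivAt (fun x : ℝ => Real.sqrt (2*x)) (1/s) r := by
    have hs' : s ≠ 0 := ne_of_gt hs
    have h := (Real.hasDerivAt_sqrt (ne_of_gt h2r)).comp r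
      ((hasDerivAt_id r).const_mul 2)
    refine h.congr_deriv ?_
    rw [← hsdef]
    field_simp
  have hSC : HasDerivAt (fun x : ℝ => ((Real.sqrt (2*x) : ℝ) : ℂ)) ((1/s : ℝ) : ℂ) r :=
    hS.ofReal_comp
  have hexp : HasDerivAt (fun x : ℝ => Complex.exp (a * Real.sqrt (2*x)))
      (Complex.exp (a * s) * (a * ((1/s : ℝ) : ℂ))) r := (hSC.const_mul a).cexp
  -- the per-term derivative
  have hterm : ∀ k : ℕ, HasDerivAt
      (fun x : ℝ => (gcoef j k : ℂ) * a^k * Complex.exp (a * Real.sqrt (2*x)) *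
        (Real.sqrt (2*x) : ℂ) ^ ((k:ℤ) - (2*(j:ℤ)+1)))
      ((gcoef j k : ℂ) * a^(k+1) * Complex.exp (a * s) * (s : ℂ)^((k:ℤ)+1 - (2*(j:ℤ)+3))
        + ((k:ℤ) - (2*(j:ℤ)+1)) * (gcoef j k : ℂ) * a^k * Complex.exp (a * s) *
          (s : ℂ)^((k:ℤ) - (2*(j:ℤ)+3))) r := by
    intro k
    have hzp : HasDerivAt (fun x : ℝ => ((Real.sqrt (2*x) : ℝ) : ℂ) ^ ((k:ℤ) - (2*(j:ℤ)+1)))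
        (((((k:ℤ) - (2*(j:ℤ)+1)) : ℤ) : ℂ) * ((s:ℝ):ℂ)^(((k:ℤ) - (2*(j:ℤ)+1)) - 1) * ((1/s : ℝ) : ℂ)) r :=
      by have := (hasDerivAt_zpow ((k:ℤ) - (2*(j:ℤ)+1)) ((s:ℝ):ℂ) (Or.inl hne)).comp r hSC; exact this
    have h := (hexp.mul hzp).const_mul ((gcoef j k : ℂ) * a^k)
    convert h using 1
    · rfl
    · funext x; simp only [Pi.mul_apply]; ring
    · have hz1 : ((s:ℝ):ℂ)^((k:ℤ)+1 - (2*(j:ℤ)+3)) =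
          ((s:ℝ):ℂ)^((k:ℤ) - (2*(j:ℤ)+1)) * ((s:ℝ):ℂ)⁻¹ := by
        rw [show (k:ℤ)+1 - (2*(j:ℤ)+3) = ((k:ℤ) - (2*(j:ℤ)+1)) - 1 by ring,
          zpow_sub_one₀ hne]
      have hz2 : ((s:ℝ):ℂ)^((k:ℤ) - (2*(j:ℤ)+3)) =
          ((s:ℝ):ℂ)^(((k:ℤ) - (2*(j:ℤ)+1)) - 1) * ((s:ℝ):ℂ)⁻¹ := by
        rw [show (k:ℤ) - (2*(j:ℤ)+3) = (((k:ℤ) - (2*(j:ℤ)+1)) - 1) - 1 by ring,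
          zpow_sub_one₀ hne]
      rw [hz1, hz2]
      push_cast
      ring
  have hsum : HasDerivAt (Gsum a j)
      (∑ k ∈ Finset.range (j+1),
        ((gcoef j k : ℂ) * a^(k+1) * Complex.exp (a * s) * (s : ℂ)^((k:ℤ)+1 - (2*(j:ℤ)+3))
        + ((k:ℤ) - (2*(j:ℤ)+1)) * (gcoef j k : ℂ) * a^k * Complex.exp (a * s) *
          (s : ℂ)^((k:ℤ) - (2*(j:ℤ)+3)))) r := by
    exact HasDerivAt.fun_sum (u := Finset.range (j+1)) (fun k _ => hterm k)
  convert hsum using 1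
  rw [Finset.sum_add_distrib, Gsum, Finset.sum_range_succ']
  -- now handle the pieces
  have hT : ∀ k ∈ Finset.range (j+1),
      ((gcoef (j+1) (k+1) : ℂ)) * a^(k+1) * Complex.exp (a * s) *
        (s : ℂ) ^ (((k+1:ℕ):ℤ) - (2*((j+1:ℕ):ℤ)+1))
      = ((gcoef j k : ℂ) * a^(k+1) * Complex.exp (a * s) * (s : ℂ)^((k:ℤ)+1 - (2*(j:ℤ)+3))
        + (((k+1:ℕ):ℤ) - (2*(j:ℤ)+1)) * (gcoef j (k+1) : ℂ) * a^(k+1) * Complex.exp (a * s) *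
          (s : ℂ)^(((k+1:ℕ):ℤ) - (2*(j:ℤ)+3))) := by
    intro k _
    show ((gcoef j k + ((k:ℤ) - 2*j) * gcoef j (k+1) : ℤ) : ℂ) * _ * _ * _ = _
    push_cast
    ring_nf
  rw [Finset.sum_congr rfl hT, Finset.sum_add_distrib]
  have hU : ∀ (m : ℕ), (((m:ℕ):ℤ) - (2*(j:ℤ)+1)) * (gcoef j m : ℂ) * a^m * Complex.exp (a * s) *
      (s : ℂ)^(((m:ℕ):ℤ) - (2*(j:ℤ)+3)) =
      (fun m : ℕ => (((m:ℕ):ℤ) - (2*(j:ℤ)+1)) * (gcoef j m : ℂ) * a^m * Complex.exp (a * s) *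
      (s : ℂ)^(((m:ℕ):ℤ) - (2*(j:ℤ)+3))) m := fun m => rfl
  -- remaining: sum over k of U (k+1)  + T' 0 = sum over k of U k
  have key : ∑ k ∈ Finset.range (j+1),
      ((((k+1:ℕ):ℤ) - (2*(j:ℤ)+1)) * (gcoef j (k+1) : ℂ) * a^(k+1) * Complex.exp (a * s) *
        (s : ℂ)^(((k+1:ℕ):ℤ) - (2*(j:ℤ)+3)))
      + (gcoef (j+1) 0 : ℂ) * a^0 * Complex.exp (a * s) * (s : ℂ) ^ (((0:ℕ):ℤ) - (2*((j+1:ℕ):ℤ)+1))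
      = ∑ k ∈ Finset.range (j+1),
      ((((k:ℕ):ℤ) - (2*(j:ℤ)+1)) * (gcoef j k : ℂ) * a^k * Complex.exp (a * s) *
        (s : ℂ)^(((k:ℕ):ℤ) - (2*(j:ℤ)+3))) := by
    rw [Finset.sum_range_succ, gcoef_eq_zero j (j+1) (by omega)]
    rw [Finset.sum_range_succ' (fun m : ℕ => (((m:ℕ):ℤ) - (2*(j:ℤ)+1)) * (gcoef j m : ℂ) * a^m *
      Complex.exp (a * s) * (s : ℂ)^(((m:ℕ):ℤ) - (2*(j:ℤ)+3))) j]
    have h0 : (gcoef (j+1) 0 : ℂ) = -(2*(j:ℤ)+1) * ((gcoef j 0 : ℤ) : ℂ) := by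
      rw [gcoef]; push_cast; ring
    rw [h0, add_assoc]
    congr 1
    push_cast
    ring_nf
  rw [add_assoc, key]

lemma iteratedDeriv_eq_gsum (a : ℂ) (j : ℕ) : ∀ r : ℝ, 0 < r →
    iteratedDeriv j (fun r : ℝ => Complex.exp (a * Real.sqrt (2*r)) / Real.sqrt (2*r)) r
      = Gsum a j r := by
  induction j with
  | zero =>
      intro r hr
      have hs : (0:ℝ) < Real.sqrt (2*r) := Real.sqrt_pos.mpr (by linarith)
      rw [iteratedDeriv_zero, Gsum, Finset.sum_range_one,
        show gcoef 0 0 = 1 from rfl,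
        show (((0:ℕ):ℤ) - (2*((0:ℕ):ℤ)+1)) = (-1:ℤ) by norm_num]
      rw [zpow_neg, zpow_one, div_eq_mul_inv]
      push_cast
      ring
  | succ j ih =>
      intro r hr
      rw [iteratedDeriv_succ]
      have hev : iteratedDeriv j (fun r : ℝ => Complex.exp (a * Real.sqrt (2*r)) / Real.sqrt (2*r))
          =ᶠ[nhds r] Gsum a j := by
        filter_upwards [(isOpen_Ioi).mem_nhds (Set.mem_Ioi.mpr hr)] with x hx
        exact ih x hx
      rw [hev.deriv_eq, (gsum_hasDerivAt a j r hr).deriv]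

lemma pow_mix_le (M x : ℝ) (hM : 0 ≤ M) (hx : 0 ≤ x) (k j : ℕ) (hk : k ≤ j) :
    M^(j-k) * x^k ≤ M^j + x^j := by
  rcases le_total x M with h | h
  · calc M^(j-k) * x^k ≤ M^(j-k) * M^k := by gcongr
      _ = M^j := by rw [← pow_add]; congr 1; omega
      _ ≤ M^j + x^j := le_add_of_nonneg_right (by positivity)
  · calc M^(j-k) * x^k ≤ x^(j-k) * x^k := by gcongr
      _ = x^j := by rw [← pow_add]; congr 1; omega
      _ ≤ M^j + x^j := le_add_of_nonneg_left (by positivity)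

theorem gamma_a_deriv_bound (a : ℂ) (j : ℕ) (ρ : ℝ) (hρ : 0 < ρ) :
    ‖iteratedDeriv j
        (fun r : ℝ => Complex.exp (a * Real.sqrt (2 * r)) / Real.sqrt (2 * r)) ρ‖ ≤
      2 ^ j * (j + 1).factorial *
        (Real.exp (j + 1) + (1 / j.factorial) * (ρ / 2) ^ ((j : ℝ) / 2) * ‖a‖ ^ j) *
        ‖Complex.exp (a * Real.sqrt (2 * ρ)) / Real.sqrt (2 * ρ)‖ / ρ ^ j := by
  have h2ρ : (0:ℝ) < 2*ρ := by linarith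
  set s := Real.sqrt (2*ρ) with hsdef
  have hs : 0 < s := Real.sqrt_pos.mpr h2ρ
  have hs2 : s^2 = 2*ρ := Real.sq_sqrt (le_of_lt h2ρ)
  set E := ‖Complex.exp (a * (s:ℂ))‖ with hEdef
  have hE : 0 ≤ E := norm_nonneg _
  set x := ‖a‖ * s with hxdef
  have hx : 0 ≤ x := mul_nonneg (norm_nonneg a) (le_of_lt hs)
  have hfabs : ‖Complex.exp (a * Real.sqrt (2 * ρ)) / Real.sqrt (2 * ρ)‖ = E / s := by
    rw [norm_div, Complex.norm_real, Real.norm_eq_abs, abs_of_pos hs]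
  rw [iteratedDeriv_eq_gsum a j ρ hρ, hfabs]
  -- term-wise absolute values
  have habs : ‖Gsum a j ρ‖ ≤
      (∑ k ∈ Finset.range (j+1), ((gcoef j k).natAbs : ℝ) * x^k) * (E / (s * (2*ρ)^j)) := by
    rw [Finset.sum_mul, Gsum]
    refine le_trans (norm_sum_le _ _) (Finset.sum_le_sum ?_)
    intro k _
    apply le_of_eq
    rw [norm_mul, norm_mul, norm_mul, norm_pow, norm_zpow, Complex.norm_real, Real.norm_eq_abs, abs_of_pos hs]
    have h1 : s^(2*(j:ℤ)+1) = (2*ρ)^j * s := by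
      rw [show (2*(j:ℤ)+1) = ((2*j+1 : ℕ):ℤ) by push_cast; ring, zpow_natCast, pow_succ,
        pow_mul, hs2]
    have h2 : s^((k:ℤ) - (2*(j:ℤ)+1)) = s^k / ((2*ρ)^j * s) := by
      rw [zpow_sub₀ (ne_of_gt hs), h1, zpow_natCast]
    rw [h2]
    have h3 : ‖((gcoef j k : ℤ) : ℂ)‖ = ((gcoef j k).natAbs : ℝ) := by
      rw [Complex.norm_intCast, Nat.cast_natAbs, ← Int.cast_abs]
    rw [h3, hxdef, mul_pow]
    simp only [← hsdef, ← hEdef]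
    rw [div_eq_mul_inv, div_eq_mul_inv, mul_inv]
    ring
  have hsum2 : (∑ k ∈ Finset.range (j+1), ((gcoef j k).natAbs : ℝ) * x^k) ≤
      2^j * ((2*(j:ℝ))^j + x^j) := by
    have h2j : (0:ℝ) ≤ 2*(j:ℝ) := by positivity
    calc (∑ k ∈ Finset.range (j+1), ((gcoef j k).natAbs : ℝ) * x^k)
        ≤ ∑ k ∈ Finset.range (j+1), (j.choose k : ℝ) * ((2*(j:ℝ))^j + x^j) := by
          apply Finset.sum_le_sum
          intro k hk
          have hkj : k ≤ j := by
            have := Finset.mem_range.mp hk; omega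
          calc ((gcoef j k).natAbs : ℝ) * x^k
              ≤ (((2*j)^(j-k) * j.choose k : ℕ) : ℝ) * x^k := by
                gcongr
                exact_mod_cast gcoef_natAbs_le j k
            _ = (j.choose k : ℝ) * ((2*(j:ℝ))^(j-k) * x^k) := by push_cast; ring
            _ ≤ (j.choose k : ℝ) * ((2*(j:ℝ))^j + x^j) := by
                have := pow_mix_le (2*(j:ℝ)) x h2j hx k j hkj
                gcongr
      _ = (((∑ k ∈ Finset.range (j+1), j.choose k : ℕ)) : ℝ) * ((2*(j:ℝ))^j + x^j) := by
          rw [← Finset.sum_mul]; push_cast; ring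
      _ = 2^j * ((2*(j:ℝ))^j + x^j) := by
          rw [Nat.sum_range_choose]; push_cast; ring
  have hstep : ‖Gsum a j ρ‖ ≤ ((2*(j:ℝ))^j + x^j) * (E/s) / ρ^j := by
    calc ‖Gsum a j ρ‖
        ≤ (∑ k ∈ Finset.range (j+1), ((gcoef j k).natAbs : ℝ) * x^k) * (E / (s * (2*ρ)^j)) :=
          habs
      _ ≤ (2^j * ((2*(j:ℝ))^j + x^j)) * (E / (s * (2*ρ)^j)) := by
          gcongr
      _ = ((2*(j:ℝ))^j + x^j) * (E/s) / ρ^j := by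
          rw [mul_pow]
          field_simp
          ring
  refine le_trans hstep ?_
  -- final numeric bound
  have hxj : x^j = 2^j * (ρ/2) ^ ((j:ℝ)/2) * ‖a‖ ^ j := by
    have hsval : s = 2 * Real.sqrt (ρ/2) := by
      rw [hsdef, show (2*ρ) = (2:ℝ)^2 * (ρ/2) by ring, Real.sqrt_mul (by positivity),
        Real.sqrt_sq (by norm_num)]
    have hrw : (ρ/2) ^ ((j:ℝ)/2) = (Real.sqrt (ρ/2))^j := by
      rw [show ((j:ℝ)/2) = (1/2) * (j:ℝ) by ring, Real.rpow_mul (by positivity),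
        Real.rpow_natCast, ← Real.sqrt_eq_rpow]
    rw [hxdef, mul_pow, hsval, mul_pow, hrw]
    ring
  have hjj : (2*(j:ℝ))^j ≤ 2^j * (j+1).factorial * Real.exp (j+1) := by
    have h1 : ((j:ℝ))^j ≤ (j.factorial : ℝ) * Real.exp j := by
      have := Real.pow_div_factorial_le_exp (x := (j:ℝ)) (by positivity) j
      rw [div_le_iff₀ (by positivity)] at this
      linarith [this]
    calc (2*(j:ℝ))^j = 2^j * (j:ℝ)^j := by rw [mul_pow]
      _ ≤ 2^j * ((j.factorial : ℝ) * Real.exp j) := by gcongr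
      _ ≤ 2^j * (((j+1).factorial : ℝ) * Real.exp ((j:ℝ)+1)) := by
          have hf : (j.factorial : ℝ) ≤ ((j+1).factorial : ℝ) := by
            exact_mod_cast Nat.factorial_le (Nat.le_succ j)
          have he : Real.exp (j:ℝ) ≤ Real.exp ((j:ℝ)+1) := Real.exp_le_exp.mpr (by linarith)
          have hmul : (j.factorial : ℝ) * Real.exp (j:ℝ) ≤
              ((j+1).factorial : ℝ) * Real.exp ((j:ℝ)+1) :=
            mul_le_mul hf he (Real.exp_pos _).le (by positivity)
          exact mul_le_mul_of_nonneg_left hmul (by positivity)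
      _ = 2^j * (j+1).factorial * Real.exp ((j:ℝ)+1) := by ring
  have hfinal : ((2*(j:ℝ))^j + x^j) ≤
      2 ^ j * (j + 1).factorial *
        (Real.exp (j + 1) + (1 / j.factorial) * (ρ / 2) ^ ((j : ℝ) / 2) * ‖a‖ ^ j) := by
    have hfact : ((j+1).factorial : ℝ) = (j+1) * j.factorial := by
      rw [Nat.factorial_succ]; push_cast; ring
    have hexp : 2 ^ j * ((j + 1).factorial : ℝ) * ((1 / j.factorial) * (ρ / 2) ^ ((j : ℝ) / 2)
        * ‖a‖ ^ j) = ((j:ℝ)+1) * x^j := by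
      rw [hxj, hfact]
      have hjf : (j.factorial : ℝ) ≠ 0 := by positivity
      field_simp
    calc ((2*(j:ℝ))^j + x^j)
        ≤ 2^j * (j+1).factorial * Real.exp (j+1) + ((j:ℝ)+1) * x^j := by
          have h2 : x^j ≤ ((j:ℝ)+1) * x^j := by
            nlinarith [pow_nonneg hx j]
          linarith [hjj]
      _ = 2 ^ j * (j + 1).factorial *
          (Real.exp (j + 1) + (1 / j.factorial) * (ρ / 2) ^ ((j : ℝ) / 2) * ‖a‖ ^ j) := by
          rw [mul_add, hexp]
  gcongr
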